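/- For any BN F on n nodes that is observable with an observation set of size m, if l is the number of fixed points of F (states x with F x = x), then 2^m ≥ l. -/
import Mathlib

/-- `F` is observable with observation set `S` if the map from an initial state to its
output sequence (the restriction of each iterate to `S`) is injective. -/
def observable {n : ℕ} (F : (Fin n → Bool) → (Fin n → Bool)) (S : Finset (Fin n)) : Prop :=
  Function.Injective (fun (x : Fin n → Bool) => fun (t : ℕ) (i : S) => (F^[t] x) i.val)

theorem fixed_points_le (n m : ℕ) (F : (Fin n → Bool) → (Fin n → Bool))
    (S : Finset (Fin n)) (hS : S.card = m) (hobs : observable F S)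
    (l : ℕ) (hl : l = (Finset.univ.filter (fun x : Fin n → Bool => F x = x)).card) :
    l ≤ 2 ^ m := by
  subst hl
  have key : ∀ x ∈ Finset.univ.filter (fun x : Fin n → Bool => F x = x),
      ∀ t : ℕ, F^[t] x = x := by
    intro x hx t
    simp only [Finset.mem_filter] at hx
    exact Function.iterate_fixed hx.2 t
  have hinj : Set.InjOn (fun (x : Fin n → Bool) (i : S) => x i.val)
      (Finset.univ.filter (fun x : Fin n → Bool => F x = x)) := by
    intro x hx y hy hxy
    apply hobs
    funext t i
    simp only [key x hx t, key y hy t]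
    exact congrFun hxy i
  calc (Finset.univ.filter (fun x : Fin n → Bool => F x = x)).card
      ≤ (Finset.univ : Finset (S → Bool)).card :=
        Finset.card_le_card_of_injOn _ (fun _ _ => Finset.mem_univ _) hinj
    _ = 2 ^ m := by simp [hS]
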